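/- Let y ~ N(θ, σ²I) in ℝⁿ with θ deterministic, θ̄ = (1/n)∑θᵢ, and δ > 0 fixed. Then (σ²/(2δ)) ∑ᵢ E[1_{|yᵢ − θ̄| ≤ δ}] = (σ/√(2π)) ∑ᵢ e^{−(θ̄−θᵢ)²/(2σ²)} + n·κ·δ for some κ with |κ| ≤ 1/√(2πe). -/

import Mathlib

open MeasureTheory ProbabilityTheory


noncomputable def gpdf (μ σ : ℝ) (x : ℝ) : ℝ :=
  (σ * Real.sqrt (2 * Real.pi))⁻¹ * Real.exp (-(x - μ) ^ 2 / (2 * σ ^ 2))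

lemma gpdf_hasDerivAt (μ σ : ℝ) (hσ : 0 < σ) (x : ℝ) :
    HasDerivAt (gpdf μ σ) (gpdf μ σ x * (-(x - μ) / σ ^ 2)) x := by
  have h1 : HasDerivAt (fun x : ℝ => -(x - μ) ^ 2 / (2 * σ ^ 2)) (-(x - μ) / σ ^ 2) x := by
    have : HasDerivAt (fun x : ℝ => x - μ) 1 x := (hasDerivAt_id x).sub_const μ
    have h2 := ((this.pow 2).neg).div_const (2 * σ ^ 2)
    refine h2.congr_deriv ?_
    field_simp
    ring
  have := (h1.exp).const_mul (σ * Real.sqrt (2 * Real.pi))⁻¹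
  refine this.congr_deriv ?_
  simp [gpdf]
  ring

lemma te_le : ∀ t : ℝ, 0 ≤ t → t * Real.exp (-t ^ 2 / 2) ≤ Real.exp (-(1:ℝ) / 2) := by
  intro t ht
  have h1 : t ≤ Real.exp ((t ^ 2 - 1) / 2) := by
    have := Real.add_one_le_exp ((t ^ 2 - 1) / 2)
    nlinarith [sq_nonneg (t - 1)]
  calc t * Real.exp (-t ^ 2 / 2) ≤ Real.exp ((t ^ 2 - 1) / 2) * Real.exp (-t ^ 2 / 2) := by
        exact mul_le_mul_of_nonneg_right h1 (Real.exp_pos _).le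
    _ = Real.exp (-(1:ℝ) / 2) := by rw [← Real.exp_add]; ring_nf

lemma sqrt_two_pi_e : Real.sqrt (2 * Real.pi * Real.exp 1)
    = Real.sqrt (2 * Real.pi) * Real.exp ((1:ℝ)/2) := by
  rw [Real.sqrt_mul (by positivity)]
  congr 1
  rw [show Real.exp 1 = Real.exp ((1:ℝ)/2) ^ 2 by
    rw [← Real.exp_nat_mul]; norm_num]
  exact Real.sqrt_sq (Real.exp_pos _).le

lemma gpdf_deriv_bound (μ σ : ℝ) (hσ : 0 < σ) (x : ℝ) :
    ‖deriv (gpdf μ σ) x‖ ≤ (σ ^ 2 * Real.sqrt (2 * Real.pi * Real.exp 1))⁻¹ := by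
  rw [(gpdf_hasDerivAt μ σ hσ x).deriv]
  set t : ℝ := |x - μ| / σ with ht
  have htnn : 0 ≤ t := by positivity
  have hexp : Real.exp (-(x - μ) ^ 2 / (2 * σ ^ 2)) = Real.exp (-t ^ 2 / 2) := by
    congr 1
    rw [ht, div_pow, sq_abs]
    field_simp
  have hπ : 0 < Real.sqrt (2 * Real.pi) := Real.sqrt_pos.mpr (by positivity)
  have key := te_le t htnn
  have : ‖gpdf μ σ x * (-(x - μ) / σ ^ 2)‖
      = (σ * Real.sqrt (2 * Real.pi))⁻¹ * Real.exp (-t ^ 2 / 2) * (t / σ) := by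
    rw [Real.norm_eq_abs, abs_mul, gpdf]
    rw [abs_mul, abs_div, abs_neg, abs_of_nonneg (Real.exp_pos _).le, hexp,
      abs_of_nonneg (by positivity : (0:ℝ) ≤ (σ * Real.sqrt (2 * Real.pi))⁻¹)]
    rw [ht, abs_of_nonneg (by positivity : (0:ℝ) ≤ σ^2)]
    ring
  rw [this, sqrt_two_pi_e]
  have h2 : Real.exp (-t ^ 2 / 2) * t ≤ Real.exp (-(1:ℝ)/2) := by linarith [te_le t htnn]
  have he : Real.exp (-(1:ℝ)/2) = (Real.exp ((1:ℝ)/2))⁻¹ := by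
    rw [← Real.exp_neg]; norm_num
  calc (σ * Real.sqrt (2 * Real.pi))⁻¹ * Real.exp (-t ^ 2 / 2) * (t / σ)
      = (Real.exp (-t ^ 2 / 2) * t) * (σ ^ 2 * Real.sqrt (2 * Real.pi))⁻¹ := by
        ring
    _ ≤ Real.exp (-(1:ℝ)/2) * (σ ^ 2 * Real.sqrt (2 * Real.pi))⁻¹ := by
        apply mul_le_mul_of_nonneg_right h2 (by positivity)
    _ = (σ ^ 2 * (Real.sqrt (2 * Real.pi) * Real.exp ((1:ℝ)/2)))⁻¹ := by
        rw [he, mul_inv, mul_inv]; ring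

lemma gpdf_continuous (μ σ : ℝ) : Continuous (gpdf μ σ) := by
  unfold gpdf
  fun_prop

lemma gpdf_nonneg (μ σ : ℝ) (hσ : 0 < σ) (x : ℝ) : 0 ≤ gpdf μ σ x := by
  unfold gpdf
  positivity

lemma key_est (μ a σ δ : ℝ) (hσ : 0 < σ) (hδ : 0 < δ) :
    |(∫ x in (a - δ)..(a + δ), gpdf μ σ x) - 2 * δ * gpdf μ σ a|
      ≤ (σ ^ 2 * Real.sqrt (2 * Real.pi * Real.exp 1))⁻¹ * δ * (2 * δ) := by
  set L : ℝ := (σ ^ 2 * Real.sqrt (2 * Real.pi * Real.exp 1))⁻¹ with hL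
  have hlip : ∀ x : ℝ, |gpdf μ σ x - gpdf μ σ a| ≤ L * |x - a| := by
    intro x
    have := Convex.norm_image_sub_le_of_norm_deriv_le
      (f := gpdf μ σ) (s := Set.univ)
      (fun z _ => (gpdf_hasDerivAt μ σ hσ z).differentiableAt)
      (fun z _ => gpdf_deriv_bound μ σ hσ z) convex_univ (Set.mem_univ a) (Set.mem_univ x)
    simpa [Real.norm_eq_abs, hL, mul_inv] using this
  have hii : IntervalIntegrable (gpdf μ σ) volume (a - δ) (a + δ) :=
    (gpdf_continuous μ σ).intervalIntegrable _ _
  have hsub : (∫ x in (a - δ)..(a + δ), gpdf μ σ x) - 2 * δ * gpdf μ σ a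
      = ∫ x in (a - δ)..(a + δ), (gpdf μ σ x - gpdf μ σ a) := by
    rw [intervalIntegral.integral_sub hii (intervalIntegrable_const)]
    rw [intervalIntegral.integral_const]
    simp only [smul_eq_mul]
    ring
  rw [hsub]
  have hbound : ∀ x ∈ Set.uIoc (a - δ) (a + δ), ‖gpdf μ σ x - gpdf μ σ a‖ ≤ L * δ := by
    intro x hx
    rw [Set.uIoc_of_le (by linarith)] at hx
    have h1 : |x - a| ≤ δ := by
      rw [abs_le]; constructor <;> [linarith [hx.1]; linarith [hx.2]]
    have h2 := hlip x
    have hLnn : 0 ≤ L := by rw [hL]; positivity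
    calc ‖gpdf μ σ x - gpdf μ σ a‖ = |gpdf μ σ x - gpdf μ σ a| := rfl
      _ ≤ L * |x - a| := h2
      _ ≤ L * δ := by exact mul_le_mul_of_nonneg_left h1 hLnn
  have := intervalIntegral.norm_integral_le_of_norm_le_const hbound
  rw [show a + δ - (a - δ) = 2 * δ by ring, abs_of_pos (by positivity)] at this
  simpa [Real.norm_eq_abs, mul_assoc] using this

lemma gaussianPDFReal_eq_gpdf (μ σ : ℝ) (hσ : 0 < σ) :
    gaussianPDFReal μ (Real.toNNReal (σ ^ 2)) = gpdf μ σ := by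
  funext x
  rw [gaussianPDFReal, gpdf]
  have hc : ((Real.toNNReal (σ ^ 2)) : ℝ) = σ ^ 2 :=
    Real.coe_toNNReal _ (sq_nonneg σ)
  rw [hc]
  congr 1
  · rw [Real.sqrt_mul (by positivity) (σ ^ 2), Real.sqrt_sq hσ.le, mul_comm]

lemma prob_eq (Ω : Type*) [MeasureSpace Ω] [IsProbabilityMeasure (ℙ : Measure Ω)]
    (σ : ℝ) (hσ : 0 < σ) (μ : ℝ) (Y : Ω → ℝ)
    (hdist : Measure.map Y ℙ = gaussianReal μ (Real.toNNReal (σ ^ 2)))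
    (a δ : ℝ) (hδ : 0 < δ) :
    (ℙ {ω | |Y ω - a| ≤ δ}).toReal = ∫ x in (a - δ)..(a + δ), gpdf μ σ x := by
  have hv : Real.toNNReal (σ ^ 2) ≠ 0 := by
    simp only [ne_eq, Real.toNNReal_eq_zero, not_le]
    positivity
  have hae : AEMeasurable Y ℙ := by
    by_contra h
    rw [Measure.map_of_not_aemeasurable h] at hdist
    have : (gaussianReal μ (Real.toNNReal (σ ^ 2))) Set.univ = 1 := measure_univ
    rw [← hdist] at this
    simp at this
  have hset : {ω | |Y ω - a| ≤ δ} = Y ⁻¹' (Set.Icc (a - δ) (a + δ)) := by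
    ext ω
    simp only [Set.mem_setOf_eq, Set.mem_preimage, Set.mem_Icc, abs_le]
    constructor <;> (intro h; constructor <;> linarith [h.1, h.2])
  rw [hset, ← Measure.map_apply_of_aemeasurable hae measurableSet_Icc, hdist,
    gaussianReal_apply_eq_integral _ hv, gaussianPDFReal_eq_gpdf μ σ hσ]
  rw [ENNReal.toReal_ofReal (setIntegral_nonneg measurableSet_Icc
    (fun x _ => gpdf_nonneg μ σ hσ x))]
  rw [MeasureTheory.integral_Icc_eq_integral_Ioc,
    intervalIntegral.integral_of_le (by linarith)]

lemma per_i (μ a σ δ : ℝ) (hσ : 0 < σ) (hδ : 0 < δ) :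
    |σ ^ 2 / (2 * δ) * (∫ x in (a - δ)..(a + δ), gpdf μ σ x)
      - σ / Real.sqrt (2 * Real.pi) * Real.exp (-(a - μ) ^ 2 / (2 * σ ^ 2))|
      ≤ δ * (Real.sqrt (2 * Real.pi * Real.exp 1))⁻¹ := by
  have hπ : 0 < Real.sqrt (2 * Real.pi) := Real.sqrt_pos.mpr (by positivity)
  have h1 : σ / Real.sqrt (2 * Real.pi) * Real.exp (-(a - μ) ^ 2 / (2 * σ ^ 2))
      = σ ^ 2 / (2 * δ) * (2 * δ * gpdf μ σ a) := by
    rw [gpdf]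
    field_simp
  rw [h1, ← mul_sub, abs_mul, abs_of_pos (by positivity : (0:ℝ) < σ ^ 2 / (2 * δ))]
  have h2 := key_est μ a σ δ hσ hδ
  have hs : 0 < Real.sqrt (2 * Real.pi * Real.exp 1) := Real.sqrt_pos.mpr (by positivity)
  calc σ ^ 2 / (2 * δ) * |(∫ x in (a - δ)..(a + δ), gpdf μ σ x) - 2 * δ * gpdf μ σ a|
      ≤ σ ^ 2 / (2 * δ) * ((σ ^ 2 * Real.sqrt (2 * Real.pi * Real.exp 1))⁻¹ * δ * (2 * δ)) :=
        mul_le_mul_of_nonneg_left h2 (by positivity)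
    _ = δ * (Real.sqrt (2 * Real.pi * Real.exp 1))⁻¹ := by
        rw [mul_inv]
        field_simp


theorem stmt_17 {Ω : Type*} [MeasureSpace Ω] [IsProbabilityMeasure (ℙ : Measure Ω)]
    (n : ℕ) (hn : 0 < n) (σ : ℝ) (hσ : 0 < σ) (θ : Fin n → ℝ) (y : Fin n → Ω → ℝ)
    (hdist : ∀ i, Measure.map (y i) ℙ = gaussianReal (θ i) (Real.toNNReal (σ ^ 2)))
    (θbar : ℝ) (hbar : θbar = (∑ i, θ i) / n) (δ : ℝ) (hδ : 0 < δ) :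
    ∃ κ : ℝ, |κ| ≤ 1 / Real.sqrt (2 * Real.pi * Real.exp 1) ∧
      (σ ^ 2 / (2 * δ)) * ∑ i, (ℙ {ω | |y i ω - θbar| ≤ δ}).toReal
        = (σ / Real.sqrt (2 * Real.pi)) * (∑ i, Real.exp (-(θbar - θ i) ^ 2 / (2 * σ ^ 2)))
          + (n : ℝ) * κ * δ := by
  set s : ℝ := Real.sqrt (2 * Real.pi * Real.exp 1) with hs
  have hspos : 0 < s := Real.sqrt_pos.mpr (by positivity)
  set ε : Fin n → ℝ := fun i => σ ^ 2 / (2 * δ) * (ℙ {ω | |y i ω - θbar| ≤ δ}).toReal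
    - σ / Real.sqrt (2 * Real.pi) * Real.exp (-(θbar - θ i) ^ 2 / (2 * σ ^ 2)) with hε
  have hεb : ∀ i, |ε i| ≤ δ * s⁻¹ := by
    intro i
    rw [hε]
    simp only
    rw [prob_eq Ω σ hσ (θ i) (y i) (hdist i) θbar δ hδ]
    exact per_i (θ i) θbar σ δ hσ hδ
  have hnδ : (0:ℝ) < (n : ℝ) * δ := by
    have : (0:ℝ) < (n : ℝ) := Nat.cast_pos.mpr hn
    positivity
  refine ⟨(∑ i, ε i) / ((n : ℝ) * δ), ?_, ?_⟩
  · rw [abs_div, abs_of_pos hnδ, div_le_iff₀ hnδ, one_div]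
    calc |∑ i, ε i| ≤ ∑ i, |ε i| := Finset.abs_sum_le_sum_abs _ _
      _ ≤ ∑ _i : Fin n, δ * s⁻¹ := Finset.sum_le_sum (fun i _ => hεb i)
      _ = (n : ℝ) * (δ * s⁻¹) := by
          rw [Finset.sum_const, Finset.card_univ, Fintype.card_fin, nsmul_eq_mul]
      _ = s⁻¹ * ((n : ℝ) * δ) := by ring
  · have hkey : (n : ℝ) * ((∑ i, ε i) / ((n : ℝ) * δ)) * δ = ∑ i, ε i := by
      field_simp
    rw [hkey, Finset.mul_sum, Finset.mul_sum]
    rw [← Finset.sum_add_distrib]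
    apply Finset.sum_congr rfl
    intro i _
    rw [hε]
    ring
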